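/- arXiv:0705.1040 — 2 statements merged into one kernel-verified Lean document; each statement's English description precedes it below -/
import Mathlib

section
/- For every finite set Q of words there exists a finite set Q' of words such that Σ_{Q'} is completely invariant, l(Σ_{Q'}) ≤ l(Σ_Q), and there exists a finite set W̃ of finite words with Σ_{Q'} ⊆ Σ_Q ⊆ ⋃_{w ∈ W̃} wΣ_{Q'}. -/
open Set Metric Filter MeasureTheory
open scoped Classical

/-- The word `[ω 0, ω 1, …, ω (n-1)]` read off from the sequence `ω`. -/
def wordOf {p : ℕ} (ω : ℕ → Fin p) (n : ℕ) : List (Fin p) :=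
  (List.range n).map ω

/-- The cylinder sets `Δ_{i₁…iₙ} = g_{i₁…i_{n-1}}(I_{iₙ})` of the iterated function
system given by the big interval `I`, the subintervals `Isub i` and the maps `g i`;
by convention `Δ_∅ = I`. -/
def cylOf {p : ℕ} (I : Set ℝ) (Isub : Fin p → Set ℝ) (g : Fin p → ℝ → ℝ) :
    List (Fin p) → Set ℝ
  | [] => I
  | [i] => Isub i
  | i :: j :: w => g i '' cylOf I Isub g (j :: w)

/-- The sequence `ω` contains the word `w` as a sub-word starting at position `n`. -/
def containsAt {p : ℕ} (ω : ℕ → Fin p) (w : List (Fin p)) (n : ℕ) : Prop :=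
  ∀ k : ℕ, (hk : k < w.length) → ω (n + k) = w.get ⟨k, hk⟩

/-- The sequence `ω` belongs to `Σ_Q`, i.e. it contains no word of `Q` as a sub-word. -/
def avoids {p : ℕ} (Q : Finset (List (Fin p))) (ω : ℕ → Fin p) : Prop :=
  ∀ w ∈ Q, ∀ n : ℕ, ¬ containsAt ω w n

/-- The limit set `Λ_Q = π(Σ_Q)`: points lying, for some `ω ∈ Σ_Q`, in all the
cylinders `Δ_{ω₀…ω_{n-1}}`. -/
def limitSetOf {p : ℕ} (I : Set ℝ) (Isub : Fin p → Set ℝ) (g : Fin p → ℝ → ℝ)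
    (Q : Finset (List (Fin p))) : Set ℝ :=
  { x | ∃ ω : ℕ → Fin p, avoids Q ω ∧ ∀ n : ℕ, x ∈ cylOf I Isub g (wordOf ω n) }

/-- `gIter g ω n = g_{i_n … i_1} = g_{ω (n-1)} ∘ ⋯ ∘ g_{ω 0}`. -/
def gIter {p : ℕ} (g : Fin p → ℝ → ℝ) (ω : ℕ → Fin p) : ℕ → ℝ → ℝ
  | 0 => id
  | n + 1 => g (ω n) ∘ gIter g ω n

/-- The derivative of the composition `gIter g ω n` at `x` (chain rule product). -/
noncomputable def gIterDer {p : ℕ} (g gder : Fin p → ℝ → ℝ) (ω : ℕ → Fin p)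
    (n : ℕ) (x : ℝ) : ℝ :=
  ∏ k ∈ Finset.range n, gder (ω k) (gIter g ω k x)

/-- Prepending the finite word `w` to the infinite sequence `ω`. -/
def prependWord {p : ℕ} (w : List (Fin p)) (ω : ℕ → Fin p) : ℕ → Fin p :=
  fun n => if h : n < w.length then w.get ⟨n, h⟩ else ω (n - w.length)

/-- `l(Σ_Q)`: the minimum, over all finite sets `Q'` of words with `Σ_{Q'} = Σ_Q`,
of the maximal length `l(Q')` of words of `Q'`. -/
noncomputable def minRepLen {p : ℕ} (Q : Finset (List (Fin p))) : ℕ :=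
  sInf { n : ℕ | ∃ Q' : Finset (List (Fin p)),
    (∀ ω : ℕ → Fin p, avoids Q' ω ↔ avoids Q ω) ∧ Q'.sup List.length = n }

/-- A `C^{1+Lip}` expansive and transitive Markov system `(Λ_Q, f)`. -/
structure ExpansiveMarkovSystem (p : ℕ) where
  /-- the alphabet is nonempty -/
  hp : 0 < p
  /-- the ambient closed interval `I` -/
  I : Set ℝ
  hI : ∃ a b : ℝ, a < b ∧ I = Set.Icc a b
  /-- the pairwise disjoint closed subintervals `I₁, …, I_p` -/
  Isub : Fin p → Set ℝ
  hIsub : ∀ i, ∃ a b : ℝ, a < b ∧ Isub i = Set.Icc a b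
  hsubI : ∀ i, Isub i ⊆ I
  hdisj : ∀ i j, i ≠ j → Disjoint (Isub i) (Isub j)
  /-- the contractions `g i`, defined on `⋃ j, Isub j` -/
  g : Fin p → ℝ → ℝ
  /-- the derivative of `g i` on `⋃ j, Isub j` -/
  gder : Fin p → ℝ → ℝ
  hg_inj : ∀ i, Set.InjOn (g i) (⋃ j, Isub j)
  hg_range : ∀ i, g i '' (⋃ j, Isub j) ⊆ interior (Isub i)
  hg_deriv : ∀ i, ∀ x ∈ ⋃ j, Isub j,
    HasDerivWithinAt (g i) (gder i x) (⋃ j, Isub j) x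
  hgder_ne : ∀ i, ∀ x ∈ ⋃ j, Isub j, gder i x ≠ 0
  hgder_cont : ∀ i, ContinuousOn (gder i) (⋃ j, Isub j)
  /-- `log |g i'|` is Lipschitz on the domain -/
  hgder_lip : ∀ i, ∃ θ : ℝ, ∀ x ∈ ⋃ j, Isub j, ∀ y ∈ ⋃ j, Isub j,
    abs (Real.log (abs (gder i x)) - Real.log (abs (gder i y))) ≤ θ * |x - y|
  /-- the expanding map `f`, with `f (g i x) = x` -/
  f : ℝ → ℝ
  /-- the derivative `f'` of `f` on the ranges of the `g i` -/
  fder : ℝ → ℝ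
  hf : ∀ i, ∀ x ∈ ⋃ j, Isub j, f (g i x) = x
  hfder : ∀ i, ∀ x ∈ ⋃ j, Isub j, fder (g i x) = (gder i x)⁻¹
  /-- the generator (expansivity) condition: `d_n → 0` -/
  hgen : ∀ ε : ℝ, 0 < ε → ∃ N : ℕ, ∀ w : List (Fin p), N ≤ w.length →
    Metric.diam (cylOf I Isub g w) < ε
  /-- the finite set of forbidden words -/
  Q : Finset (List (Fin p))
  /-- `Σ_Q` is completely invariant: `σ(Σ_Q) = Σ_Q` -/
  hQinv : ∀ ω : ℕ → Fin p, avoids Q ω →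
    ∃ ω' : ℕ → Fin p, avoids Q ω' ∧ ∀ n : ℕ, ω' (n + 1) = ω n
  /-- `f|Λ_Q` is topologically transitive -/
  htrans : ∀ U V : Set ℝ, IsOpen U → IsOpen V →
    (U ∩ limitSetOf I Isub g Q).Nonempty → (V ∩ limitSetOf I Isub g Q).Nonempty →
    ∃ n : ℕ, ∃ x ∈ U ∩ limitSetOf I Isub g Q, f^[n] x ∈ V

namespace ExpansiveMarkovSystem

variable {p : ℕ} (S : ExpansiveMarkovSystem p)

/-- The common domain `⋃ j, I_j` of the maps `g i`. -/
def dom : Set ℝ := ⋃ j, S.Isub j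

/-- The cylinder `Δ_w` associated to the word `w`. -/
def cyl (w : List (Fin p)) : Set ℝ := cylOf S.I S.Isub S.g w

/-- The limit set `Λ_Q`. -/
def limitSet : Set ℝ := limitSetOf S.I S.Isub S.g S.Q

/-- The domain of `f`, i.e. the union of the ranges of the `g i`. -/
def domF : Set ℝ := ⋃ i, S.g i '' S.dom

/-- The derivative `(fⁿ)'(x)` of the `n`-th iterate of `f` at `x`. -/
noncomputable def derIter (n : ℕ) (x : ℝ) : ℝ :=
  ∏ k ∈ Finset.range n, S.fder (S.f^[k] x)

/-- The Lyapunov exponent `χ(x) = limsup (1/n) log |(fⁿ)'(x)|`. -/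
noncomputable def lyap (x : ℝ) : ℝ :=
  Filter.limsup (fun n : ℕ => Real.log |S.derIter n x| / n) Filter.atTop

/-- The set `H` of points of `Λ_Q` with infinitely many hyperbolic instants. -/
def hypSet : Set ℝ :=
  { x ∈ S.limitSet | ∃ c₁ : ℝ, 0 < c₁ ∧ ∃ c₂ : ℝ, 0 < c₂ ∧
      ∃ n : ℕ → ℕ, StrictMono n ∧
        ∃ r : ℕ → ℝ, (∀ k, 0 < r k) ∧ Antitone r ∧
          Filter.Tendsto r Filter.atTop (nhds 0) ∧
          ∀ k : ℕ,
            (∀ y ∈ Metric.ball x (r k), ∀ j < n k, S.f^[j] y ∈ S.domF) ∧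
            c₁ < Metric.diam (S.f^[n k] '' Metric.ball x (r k)) ∧
            (∀ y ∈ Metric.ball x (r k), ∀ z ∈ Metric.ball x (r k),
              |S.derIter (n k) y| / |S.derIter (n k) z| < c₂) }

/-- `x` is a parabolic periodic point: `f^m(x) = x` and `|(f^m)'(x)| = 1`. -/
def IsParabolicPeriodic (x : ℝ) : Prop :=
  x ∈ S.limitSet ∧ ∃ m : ℕ, 1 ≤ m ∧ S.f^[m] x = x ∧ |S.derIter m x| = 1

/-- `ν` is a `t`-conformal (Borel probability) measure supported on `Λ_Q`. -/
def IsConformal (ν : Measure ℝ) (t : ℝ) : Prop :=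
  IsProbabilityMeasure ν ∧ ν S.limitSetᶜ = 0 ∧
    ∀ A : Set ℝ, MeasurableSet A → A ⊆ S.limitSet → Set.InjOn S.f A →
      ν (S.f '' A) = ∫⁻ x in A, ENNReal.ofReal (|S.fder x| ^ t) ∂ν

/-- `t_c = inf {t ≥ 0 : a t-conformal measure on Λ_Q exists}`. -/
noncomputable def tc : ℝ :=
  sInf { t : ℝ | 0 ≤ t ∧ ∃ ν : Measure ℝ, S.IsConformal ν t }

/-- `n` is a hyperbolic time for `x` with exponent `α`. -/
def IsHypTime (α : ℝ) (x : ℝ) (n : ℕ) : Prop :=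
  ∀ k : ℕ, 1 ≤ k → k ≤ n → Real.exp (k * α) ≤ |S.derIter k (S.f^[n - k] x)|

/-- `H_HT(α)`: the points of `Λ_Q` with infinitely many hyperbolic times with exponent `α`. -/
def HHT (α : ℝ) : Set ℝ :=
  { x ∈ S.limitSet | ∀ N : ℕ, ∃ n : ℕ, N ≤ n ∧ S.IsHypTime α x n }

end ExpansiveMarkovSystem

namespace CIS

variable {p : ℕ}

/-- The window of `ω` of length `m` starting at position `n`. -/
def seg (ω : ℕ → Fin p) (n m : ℕ) : List (Fin p) :=
  (List.range m).map (fun k => ω (n + k))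

@[simp] lemma seg_length (ω : ℕ → Fin p) (n m : ℕ) : (seg ω n m).length = m := by
  simp [seg]

lemma seg_getElem (ω : ℕ → Fin p) (n m k : ℕ) (h : k < (seg ω n m).length) :
    (seg ω n m)[k] = ω (n + k) := by
  simp at h
  simp [seg, h]

lemma seg_append (ω : ℕ → Fin p) (n a b : ℕ) :
    seg ω n (a + b) = seg ω n a ++ seg ω (n + a) b := by
  apply List.ext_getElem (by simp)
  intro i h1 h2
  rcases lt_or_ge i a with hi | hi
  · rw [List.getElem_append_left (by simpa using hi)]
    rw [seg_getElem, seg_getElem]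
  · rw [List.getElem_append_right (by simpa using hi)]
    rw [seg_getElem, seg_getElem]
    simp only [seg_length]
    congr 1
    simp at h1
    omega

lemma seg_congr {ω ω' : ℕ → Fin p} {n n' m : ℕ}
    (h : ∀ k, k < m → ω (n + k) = ω' (n' + k)) : seg ω n m = seg ω' n' m := by
  apply List.ext_getElem (by simp)
  intro i h1 h2
  rw [seg_getElem, seg_getElem]
  exact h i (by simpa using h1)

lemma containsAt_iff (ω : ℕ → Fin p) (q : List (Fin p)) (n : ℕ) :
    containsAt ω q n ↔ seg ω n q.length = q := by
  constructor
  · intro h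
    apply List.ext_getElem (by simp)
    intro i h1 h2
    rw [seg_getElem]
    simpa [List.get_eq_getElem] using h i h2
  · intro h k hk
    have hk' : k < (seg ω n q.length).length := by simpa using hk
    have h2 := (seg_getElem ω n q.length k hk').symm.trans (List.getElem_of_eq h hk')
    simpa [List.get_eq_getElem] using h2

lemma infix_seg {ω : ℕ → Fin p} {q : List (Fin p)} {n m : ℕ}
    (h : q <:+: seg ω n m) : ∃ j, containsAt ω q (n + j) := by
  obtain ⟨s, t, hst⟩ := h
  refine ⟨s.length, ?_⟩
  intro k hk
  have hlen : s.length + k < (seg ω n m).length := by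
    rw [← hst]; simp; omega
  have h0 := List.getElem_of_eq hst.symm hlen
  have h1 : ∀ hx : (s.length + k) < (s ++ q ++ t).length,
      (s ++ q ++ t)[s.length + k]'hx = q[k] := by
    intro hx
    rw [List.getElem_append_left (by simp; omega),
      List.getElem_append_right (by omega)]
    congr 1
    omega
  have h2 := (seg_getElem ω n m (s.length + k) hlen).symm.trans (h0.trans (h1 _))
  rw [List.get_eq_getElem, ← h2]
  congr 1
  omega

/-- All words of length `l`. -/
noncomputable def allWords (p l : ℕ) : Finset (List (Fin p)) :=
  Finset.image (fun f : Fin l → Fin p => List.ofFn f) Finset.univ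

lemma mem_allWords {l : ℕ} {a : List (Fin p)} : a ∈ allWords p l ↔ a.length = l := by
  constructor
  · rintro h
    simp only [allWords, Finset.mem_image] at h
    obtain ⟨f, -, rfl⟩ := h
    simp
  · intro h
    subst h
    simp only [allWords, Finset.mem_image]
    exact ⟨fun i => a[(i : ℕ)], Finset.mem_univ _, List.ofFn_getElem⟩

/-- `a` contains no occurrence of a word of `R`. -/
def NoOcc (R : Finset (List (Fin p))) (a : List (Fin p)) : Prop :=
  ∀ q ∈ R, ¬ q <:+: a

lemma NoOcc.mono {R : Finset (List (Fin p))} {a b : List (Fin p)}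
    (hba : b <:+: a) (h : NoOcc R a) : NoOcc R b :=
  fun q hq hqb => h q hq (hqb.trans hba)

/-- `a` admits left extensions of length `N` avoiding `R`. -/
def ExtN (R : Finset (List (Fin p))) (N : ℕ) (a : List (Fin p)) : Prop :=
  ∃ u : List (Fin p), u.length = N ∧ NoOcc R (u ++ a)

lemma ExtN.anti {R : Finset (List (Fin p))} {N M : ℕ} {a : List (Fin p)}
    (hNM : N ≤ M) (h : ExtN R M a) : ExtN R N a := by
  obtain ⟨u, hu, hno⟩ := h
  refine ⟨u.drop (M - N), by simp [hu]; omega, ?_⟩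
  apply hno.mono
  refine ⟨u.take (M - N), [], ?_⟩
  rw [List.append_nil, ← List.append_assoc, List.take_append_drop]

/-- `a` admits arbitrarily long left extensions avoiding `R`. -/
def Lext (R : Finset (List (Fin p))) (a : List (Fin p)) : Prop :=
  ∀ N, ExtN R N a

lemma Lext.prefix {R : Finset (List (Fin p))} {a b : List (Fin p)}
    (h : Lext R (a ++ b)) : Lext R a := by
  intro N
  obtain ⟨u, hu, hno⟩ := h N
  refine ⟨u, hu, hno.mono ?_⟩
  refine ⟨[], b, by simp⟩

lemma avoids_iff {R : Finset (List (Fin p))} {ω : ℕ → Fin p} :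
    avoids R ω ↔ ∀ n m, NoOcc R (seg ω n m) := by
  constructor
  · intro h n m q hq hinf
    obtain ⟨j, hj⟩ := infix_seg hinf
    exact h q hq (n + j) hj
  · intro h q hq n hc
    rw [containsAt_iff] at hc
    refine h n q.length q hq ?_
    rw [hc]

/-- The completely invariant forbidden set built from `R` and window length `l`. -/
noncomputable def Qinv (R : Finset (List (Fin p))) (l : ℕ) : Finset (List (Fin p)) :=
  (allWords p l).filter (fun a => ¬ Lext R a)

lemma avoids_Qinv_iff {R : Finset (List (Fin p))} {l : ℕ} {ω : ℕ → Fin p} :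
    avoids (Qinv R l) ω ↔ ∀ n, Lext R (seg ω n l) := by
  constructor
  · intro h n
    by_contra hA
    have hmem : seg ω n l ∈ Qinv R l := by
      simp only [Qinv, Finset.mem_filter]
      exact ⟨mem_allWords.mpr (seg_length ω n l), hA⟩
    refine h _ hmem n ?_
    rw [containsAt_iff, seg_length]
  · intro h q hq n hc
    simp only [Qinv, Finset.mem_filter, mem_allWords] at hq
    rw [containsAt_iff, hq.1] at hc
    exact hq.2 (hc ▸ h n)

end CIS


/-- For every finite set `Q` of words there exists a finite set `Q'` of words
such that `Σ_{Q'}` is completely invariant, `l(Σ_{Q'}) ≤ l(Σ_Q)`, and there is a finite set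
`W̃` of finite words with `Σ_{Q'} ⊆ Σ_Q ⊆ ⋃_{w ∈ W̃} w Σ_{Q'}`. -/
theorem exists_completely_invariant_subsystem {p : ℕ} (Q : Finset (List (Fin p))) :
    ∃ Q' : Finset (List (Fin p)),
      (∀ ω : ℕ → Fin p, avoids Q' ω →
        ∃ ω'' : ℕ → Fin p, avoids Q' ω'' ∧ ∀ n : ℕ, ω'' (n + 1) = ω n) ∧
      minRepLen Q' ≤ minRepLen Q ∧
      ∃ W : Finset (List (Fin p)),
        (∀ ω : ℕ → Fin p, avoids Q' ω → avoids Q ω) ∧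
        (∀ ω : ℕ → Fin p, avoids Q ω →
          ∃ w ∈ W, ∃ ω'' : ℕ → Fin p, avoids Q' ω'' ∧ ω = prependWord w ω'') := by
    classical
  have hmem : minRepLen Q ∈ { n : ℕ | ∃ Q' : Finset (List (Fin p)),
      (∀ ω : ℕ → Fin p, avoids Q' ω ↔ avoids Q ω) ∧ Q'.sup List.length = n } :=
    Nat.sInf_mem ⟨Q.sup List.length, Q, fun _ => Iff.rfl, rfl⟩
  obtain ⟨R, hR, hl⟩ := hmem
  set l := minRepLen Q with hldef
  refine ⟨CIS.Qinv R l, ?_, ?_, ?_⟩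
  · -- complete invariance
    intro ω hω
    rw [CIS.avoids_Qinv_iff] at hω
    have hch : ∀ N : ℕ, ∃ u : List (Fin p),
        u.length = N + 1 ∧ CIS.NoOcc R (u ++ CIS.seg ω 0 l) := fun N => hω 0 (N + 1)
    choose u hulen huno using hch
    have hne : ∀ N, u N ≠ [] := by
      intro N h
      have := hulen N
      rw [h] at this
      simp at this
    obtain ⟨i, hi⟩ := Finite.exists_infinite_fiber (fun N => (u N).getLast (hne N))
    have hLi : CIS.Lext R (i :: CIS.seg ω 0 l) := by
      intro N
      obtain ⟨M, hMmem, hMN'⟩ :=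
        (Set.infinite_coe_iff.mp hi).exists_notMem_finite (Set.finite_Iic N)
      have hMN : N < M := by simpa using hMN'
      have hfM : (u M).getLast (hne M) = i := hMmem
      have hsplit : u M = (u M).dropLast ++ [i] := by
        conv_lhs => rw [← List.dropLast_append_getLast (hne M)]
        rw [hfM]
      have hdl : (u M).dropLast.length = M := by simp [hulen M]
      have hext : CIS.ExtN R M (i :: CIS.seg ω 0 l) := by
        refine ⟨(u M).dropLast, hdl, ?_⟩
        have h2 := huno M
        rw [hsplit, List.append_assoc, List.singleton_append] at h2
        exact h2
      exact hext.anti (le_of_lt hMN)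
    refine ⟨fun n => if n = 0 then i else ω (n - 1), ?_, fun n => by simp⟩
    rw [CIS.avoids_Qinv_iff]
    intro n
    match n with
    | Nat.succ m =>
      have hseg : CIS.seg (fun n => if n = 0 then i else ω (n - 1)) (m + 1) l
          = CIS.seg ω m l := by
        refine CIS.seg_congr (fun k hk => ?_)
        have : m + 1 + k ≠ 0 := by omega
        rw [if_neg this]
        congr 1
        omega
      rw [hseg]
      exact hω m
    | 0 =>
      match l with
      | 0 =>
        have h0 : CIS.seg (fun n => if n = 0 then i else ω (n - 1)) 0 0
            = CIS.seg ω 0 0 := rfl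
        rw [h0]
        exact hω 0
      | Nat.succ m =>
        have hseg : CIS.seg (fun n => if n = 0 then i else ω (n - 1)) 0 (m + 1)
            = i :: CIS.seg ω 0 m := by
          rw [show m + 1 = 1 + m by omega, CIS.seg_append]
          have h1 : CIS.seg (fun n => if n = 0 then i else ω (n - 1)) 0 1 = [i] := by
            simp [CIS.seg, List.range_succ]
          have h2 : CIS.seg (fun n => if n = 0 then i else ω (n - 1)) (0 + 1) m
              = CIS.seg ω 0 m := by
            refine CIS.seg_congr (fun k hk => ?_)
            have : 0 + 1 + k ≠ 0 := by omega
            rw [if_neg this]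
            congr 1
            omega
          rw [h1, h2, List.singleton_append]
        rw [hseg]
        have hcons : i :: CIS.seg ω 0 (m + 1)
            = (i :: CIS.seg ω 0 m) ++ CIS.seg ω (0 + m) 1 := by
          rw [show m + 1 = m + 1 from rfl]
          rw [CIS.seg_append ω 0 m 1]
          rfl
        rw [hcons] at hLi
        exact hLi.prefix
  · -- minRepLen bound
    have h1 : minRepLen (CIS.Qinv R l) ≤ (CIS.Qinv R l).sup List.length :=
      Nat.sInf_le ⟨CIS.Qinv R l, fun _ => Iff.rfl, rfl⟩
    refine h1.trans (Finset.sup_le fun a ha => ?_)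
    simp only [CIS.Qinv, Finset.mem_filter, CIS.mem_allWords] at ha
    exact le_of_eq ha.1
  · -- the covering
    have key : ∀ a : List (Fin p), ∃ N, a ∈ CIS.Qinv R l → ¬ CIS.ExtN R N a := by
      intro a
      by_cases ha : a ∈ CIS.Qinv R l
      · simp only [CIS.Qinv, Finset.mem_filter] at ha
        obtain ⟨N, hN⟩ := not_forall.mp ha.2
        exact ⟨N, fun _ => hN⟩
      · exact ⟨0, fun h => absurd h ha⟩
    choose g hg using key
    set M := (CIS.Qinv R l).sup g with hMdef
    have hM : ∀ a ∈ CIS.Qinv R l, ¬ CIS.ExtN R M a := by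
      intro a ha hext
      exact hg a ha (hext.anti (Finset.le_sup ha))
    refine ⟨CIS.allWords p M, ?_, ?_⟩
    · -- Σ_{Q'} ⊆ Σ_Q
      intro ω hω
      rw [← hR ω, CIS.avoids_iff]
      rw [CIS.avoids_Qinv_iff] at hω
      intro n m q hq hinf
      obtain ⟨j, hj⟩ := CIS.infix_seg hinf
      have hql : q.length ≤ l := hl ▸ Finset.le_sup hq
      have hno : CIS.NoOcc R (CIS.seg ω (n + j) l) := by
        obtain ⟨v, hv0, hnv⟩ := hω (n + j) 0
        have hvnil : v = [] := List.eq_nil_of_length_eq_zero hv0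
        rwa [hvnil, List.nil_append] at hnv
      rw [CIS.containsAt_iff] at hj
      have hsplit : CIS.seg ω (n + j) l
          = q ++ CIS.seg ω (n + j + q.length) (l - q.length) := by
        conv_lhs => rw [show l = q.length + (l - q.length) by omega]
        rw [CIS.seg_append, hj]
      exact hno q hq ⟨[], CIS.seg ω (n + j + q.length) (l - q.length), by
        rw [List.nil_append, hsplit]⟩
    · -- Σ_Q ⊆ ⋃ w Σ_{Q'}
      intro ω hω
      have hωR : avoids R ω := (hR ω).mpr hω
      rw [CIS.avoids_iff] at hωR
      refine ⟨CIS.seg ω 0 M, CIS.mem_allWords.mpr (CIS.seg_length ω 0 M),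
        fun n => ω (n + M), ?_, ?_⟩
      · rw [CIS.avoids_Qinv_iff]
        intro n
        have hseg : CIS.seg (fun k => ω (k + M)) n l = CIS.seg ω (n + M) l := by
          refine CIS.seg_congr (fun k hk => ?_)
          congr 1
          omega
        rw [hseg]
        by_contra hA
        have hmem2 : CIS.seg ω (n + M) l ∈ CIS.Qinv R l :=
          Finset.mem_filter.mpr ⟨CIS.mem_allWords.mpr (CIS.seg_length ω (n + M) l), hA⟩
        refine hM _ hmem2 ⟨CIS.seg ω n M, CIS.seg_length ω n M, ?_⟩
        rw [← CIS.seg_append]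
        exact hωR n (M + l)
      · funext n
        rcases lt_or_ge n M with h | h
        · rw [prependWord, dif_pos (show n < (CIS.seg ω 0 M).length by simpa using h)]
          have hg2 := CIS.seg_getElem ω 0 M n (by simpa using h)
          simp only [List.get_eq_getElem, hg2]
          congr 1
          omega
        · rw [prependWord, dif_neg (by simp; omega)]
          simp only [CIS.seg_length]
          congr 1
          omega
end

section
/- Let (Λ_Q, f) be a C^{1+Lip} expansive and transitive Markov system and let ν be a t-conformal measure on Λ_Q for some t ≥ 0. Then ν(Δ_{i_1…i_n} ∩ Λ_Q) > 0 for every word (i_1…i_n) whose cylinder Δ_{i_1…i_n} has nonempty intersection with Λ_Q. -/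
open Set Metric Filter MeasureTheory
open scoped Classical

/-! ### Auxiliary lemmas for Statement 8 -/

section Aux

lemma wordOf_length' {p : ℕ} (ω : ℕ → Fin p) (n : ℕ) : (wordOf ω n).length = n := by
  simp [wordOf]

lemma wordOf_ne_nil {p : ℕ} (ω : ℕ → Fin p) {n : ℕ} (hn : 0 < n) : wordOf ω n ≠ [] := by
  intro h
  have := congrArg List.length h
  simp [wordOf] at this
  omega

lemma wordOf_add {p : ℕ} (ω : ℕ → Fin p) (m k : ℕ) :
    wordOf ω (m + k) = wordOf ω m ++ (List.range k).map (fun i => ω (m + i)) := by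
  simp [wordOf, List.range_add, List.map_map]

lemma wordOf_cons {p : ℕ} (ω : ℕ → Fin p) (n : ℕ) :
    wordOf ω (n + 1) = ω 0 :: wordOf (fun i => ω (i + 1)) n := by
  simp [wordOf, List.range_succ_eq_map, List.map_map]

lemma wordOf_one {p : ℕ} (ω : ℕ → Fin p) : wordOf ω 1 = [ω 0] := by
  simp [wordOf, List.range_succ]

lemma wordOf_eq_iff {p : ℕ} {ω ω' : ℕ → Fin p} {n : ℕ} :
    wordOf ω n = wordOf ω' n ↔ ∀ i < n, ω i = ω' i := by
  simp [wordOf, List.map_inj_left]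

lemma avoids_shift {p : ℕ} {Q : Finset (List (Fin p))} {ω : ℕ → Fin p}
    (h : avoids Q ω) (k : ℕ) : avoids Q (fun i => ω (i + k)) := by
  intro q hq n hc
  apply h q hq (n + k)
  intro j hj
  have h1 := hc j hj
  simpa [show n + k + j = n + j + k by omega] using h1

namespace ExpansiveMarkovSystem

variable {p : ℕ} (S : ExpansiveMarkovSystem p)

lemma Isub_nonempty (i : Fin p) : (S.Isub i).Nonempty := by
  obtain ⟨a, b, hab, h⟩ := S.hIsub i
  rw [h]
  exact Set.nonempty_Icc.2 hab.le

lemma Isub_sub_dom (i : Fin p) : S.Isub i ⊆ S.dom := Set.subset_iUnion _ i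

lemma dom_compact : IsCompact S.dom := by
  apply isCompact_iUnion
  intro i
  obtain ⟨a, b, _, h⟩ := S.hIsub i
  rw [h]
  exact isCompact_Icc

lemma dom_sub_I : S.dom ⊆ S.I := Set.iUnion_subset S.hsubI

lemma g_contOn (i : Fin p) : ContinuousOn (S.g i) S.dom :=
  fun x hx => (S.hg_deriv i x hx).continuousWithinAt

lemma cyl_cons_subset (i : Fin p) (t : List (Fin p)) : S.cyl (i :: t) ⊆ S.Isub i := by
  induction t generalizing i with
  | nil => exact Set.Subset.rfl
  | cons j s ih =>
    have h1 : S.cyl (i :: j :: s) = S.g i '' S.cyl (j :: s) := rfl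
    rw [h1]
    refine (Set.image_mono ((ih j).trans (S.Isub_sub_dom j))).trans ?_
    exact (S.hg_range i).trans interior_subset

lemma cyl_sub_dom {l : List (Fin p)} (hl : l ≠ []) : S.cyl l ⊆ S.dom := by
  cases l with
  | nil => exact absurd rfl hl
  | cons i t => exact (S.cyl_cons_subset i t).trans (S.Isub_sub_dom i)

lemma cyl_sub_I (l : List (Fin p)) : S.cyl l ⊆ S.I := by
  cases l with
  | nil => exact Set.Subset.rfl
  | cons i t => exact (S.cyl_cons_subset i t).trans (S.hsubI i)

lemma cyl_compact (l : List (Fin p)) : IsCompact (S.cyl l) := by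
  induction l with
  | nil =>
    obtain ⟨a, b, _, h⟩ := S.hI
    show IsCompact S.I
    rw [h]; exact isCompact_Icc
  | cons i t ih =>
    cases t with
    | nil =>
      obtain ⟨a, b, _, h⟩ := S.hIsub i
      show IsCompact (S.Isub i)
      rw [h]; exact isCompact_Icc
    | cons j s =>
      exact ih.image_of_continuousOn ((S.g_contOn i).mono (S.cyl_sub_dom (by simp)))

lemma cyl_closed (l : List (Fin p)) : IsClosed (S.cyl l) := (S.cyl_compact l).isClosed

lemma cyl_nonempty (l : List (Fin p)) : (S.cyl l).Nonempty := by
  induction l with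
  | nil =>
    obtain ⟨a, b, hab, h⟩ := S.hI
    show (S.I).Nonempty
    rw [h]; exact Set.nonempty_Icc.2 hab.le
  | cons i t ih =>
    cases t with
    | nil => exact S.Isub_nonempty i
    | cons j s => exact ih.image _

lemma cyl_cons_eq (i : Fin p) {t : List (Fin p)} (ht : t ≠ []) :
    S.cyl (i :: t) = S.g i '' S.cyl t := by
  cases t with
  | nil => exact absurd rfl ht
  | cons j s => rfl

lemma cyl_append_subset {l : List (Fin p)} (hl : l ≠ []) (l' : List (Fin p)) :
    S.cyl (l ++ l') ⊆ S.cyl l := by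
  induction l with
  | nil => exact absurd rfl hl
  | cons i t ih =>
    cases t with
    | nil =>
      cases l' with
      | nil => exact Set.Subset.rfl
      | cons a s => exact S.cyl_cons_subset i (a :: s)
    | cons j s =>
      rw [List.cons_append, S.cyl_cons_eq i (by simp), S.cyl_cons_eq i (by simp)]
      exact Set.image_mono (ih (by simp))

lemma cyl_wordOf_mono {ω : ℕ → Fin p} {m n : ℕ} (h : m ≤ n) :
    S.cyl (wordOf ω n) ⊆ S.cyl (wordOf ω m) := by
  rcases Nat.eq_zero_or_pos m with hm | hm
  · subst hm
    exact S.cyl_sub_I _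
  · obtain ⟨k, rfl⟩ : ∃ k, n = m + k := ⟨n - m, by omega⟩
    rw [wordOf_add]
    exact S.cyl_append_subset (wordOf_ne_nil ω hm) _

lemma cyl_disjoint : ∀ {u v : List (Fin p)}, u.length = v.length → u ≠ [] → u ≠ v →
    Disjoint (S.cyl u) (S.cyl v) := by
  intro u
  induction u with
  | nil => intro v _ h _; exact absurd rfl h
  | cons i t ih =>
    intro v hlen _ hne
    cases v with
    | nil => simp at hlen
    | cons j s =>
      by_cases hij : i = j
      · subst hij
        have hts : t ≠ s := fun h => hne (by rw [h])
        have hlen' : t.length = s.length := by simpa using hlen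
        have ht : t ≠ [] := by
          intro h
          apply hts
          rw [h] at hlen' ⊢
          exact (List.eq_nil_of_length_eq_zero hlen'.symm).symm
        have hs : s ≠ [] := by
          intro h
          rw [h] at hlen'
          simp at hlen'
          exact ht hlen'
        rw [S.cyl_cons_eq i ht, S.cyl_cons_eq i hs]
        have hd := ih hlen' ht hts
        rw [Set.disjoint_left]
        rintro a ⟨x, hx, rfl⟩ ⟨y, hy, hxy⟩
        have hxy' : y = x :=
          S.hg_inj i (S.cyl_sub_dom hs hy) (S.cyl_sub_dom ht hx) hxy
        rw [hxy'] at hy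
        exact Set.disjoint_left.1 hd hx hy
      · exact Set.disjoint_of_subset (S.cyl_cons_subset i t) (S.cyl_cons_subset j s)
          (S.hdisj i j hij)

lemma cyl_eq_of_mem {x : ℝ} {u v : List (Fin p)} (hu : x ∈ S.cyl u) (hv : x ∈ S.cyl v)
    (hlen : u.length = v.length) (hne : u ≠ []) : u = v := by
  by_contra h
  exact Set.disjoint_left.1 (S.cyl_disjoint hlen hne h) hu hv

/-- The intersection of the cylinders along a sequence. -/
def piSet (ω : ℕ → Fin p) : Set ℝ := ⋂ n, S.cyl (wordOf ω n)

lemma piSet_nonempty (ω : ℕ → Fin p) : (S.piSet ω).Nonempty :=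
  IsCompact.nonempty_iInter_of_sequence_nonempty_isCompact_isClosed _
    (fun n => S.cyl_wordOf_mono (Nat.le_succ n)) (fun n => S.cyl_nonempty _)
    (S.cyl_compact _) (fun n => S.cyl_closed _)

lemma piSet_subsingleton {ω : ℕ → Fin p} {x y : ℝ} (hx : x ∈ S.piSet ω)
    (hy : y ∈ S.piSet ω) : x = y := by
  by_contra hne
  have hd : 0 < dist x y := dist_pos.2 hne
  obtain ⟨N, hN⟩ := S.hgen (dist x y) hd
  have hx' := Set.mem_iInter.1 hx N
  have hy' := Set.mem_iInter.1 hy N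
  have h1 : dist x y ≤ Metric.diam (S.cyl (wordOf ω N)) :=
    Metric.dist_le_diam_of_mem (S.cyl_compact _).isBounded hx' hy'
  have h2 := hN (wordOf ω N) (by rw [wordOf_length'])
  change Metric.diam (S.cyl (wordOf ω N)) < dist x y at h2
  linarith

lemma cyl_wordOf_sub_dom {ω : ℕ → Fin p} {n : ℕ} (hn : 0 < n) :
    S.cyl (wordOf ω n) ⊆ S.dom := S.cyl_sub_dom (wordOf_ne_nil ω hn)

lemma piSet_step {ω : ℕ → Fin p} {x : ℝ} (hx : x ∈ S.piSet ω) :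
    x = S.g (ω 0) (S.f x) ∧ S.f x ∈ S.piSet (fun i => ω (i + 1)) := by
  set ω' : ℕ → Fin p := fun i => ω (i + 1) with hω'
  have key : ∀ n : ℕ, 0 < n → x ∈ S.g (ω 0) '' S.cyl (wordOf ω' n) := by
    intro n hn
    have h1 := Set.mem_iInter.1 hx (n + 1)
    rw [wordOf_cons, S.cyl_cons_eq _ (wordOf_ne_nil _ hn)] at h1
    exact h1
  obtain ⟨y, hy, hxy⟩ := key 1 one_pos
  rw [wordOf_one] at hy
  have hyI : y ∈ S.Isub (ω' 0) := hy
  have hydom : y ∈ S.dom := S.Isub_sub_dom _ hyI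
  have hfx : S.f x = y := by rw [← hxy]; exact S.hf (ω 0) y hydom
  refine ⟨by rw [hfx, hxy], Set.mem_iInter.2 fun n => ?_⟩
  rcases Nat.eq_zero_or_pos n with hn | hn
  · subst hn
    rw [hfx]
    exact S.hsubI _ hyI
  · obtain ⟨y', hy', hxy'⟩ := key n hn
    have hy'dom : y' ∈ S.dom := S.cyl_wordOf_sub_dom hn hy'
    have : y' = y := S.hg_inj (ω 0) hy'dom hydom (hxy'.trans hxy.symm)
    rw [hfx, ← this]
    exact hy'

lemma piSet_iterate {ω : ℕ → Fin p} {x : ℝ} (hx : x ∈ S.piSet ω) (k : ℕ) :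
    S.f^[k] x ∈ S.piSet (fun i => ω (i + k)) := by
  induction k with
  | zero => simpa using hx
  | succ k ih =>
    have h2 := (S.piSet_step ih).2
    have h3 : (fun i => (fun j => ω (j + k)) (i + 1)) = fun i => ω (i + (k + 1)) := by
      funext i
      show ω (i + 1 + k) = ω (i + (k + 1))
      congr 1
      omega
    rw [h3] at h2
    rw [Function.iterate_succ_apply']
    exact h2

lemma mem_limitSet_iff {x : ℝ} :
    x ∈ S.limitSet ↔ ∃ ω, avoids S.Q ω ∧ x ∈ S.piSet ω := by
  constructor
  · rintro ⟨ω, h1, h2⟩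
    exact ⟨ω, h1, Set.mem_iInter.2 h2⟩
  · rintro ⟨ω, h1, h2⟩
    exact ⟨ω, h1, fun n => Set.mem_iInter.1 h2 n⟩

lemma limitSet_sub_dom : S.limitSet ⊆ S.dom := by
  intro x hx
  obtain ⟨ω, _, hpi⟩ := S.mem_limitSet_iff.1 hx
  exact S.cyl_wordOf_sub_dom one_pos (Set.mem_iInter.1 hpi 1)

lemma limitSet_decomp {x : ℝ} (hx : x ∈ S.limitSet) :
    ∃ i, S.f x ∈ S.dom ∧ S.f x ∈ S.limitSet ∧ x = S.g i (S.f x) := by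
  obtain ⟨ω, hω, hpi⟩ := S.mem_limitSet_iff.1 hx
  obtain ⟨hgx, hfpi⟩ := S.piSet_step hpi
  refine ⟨ω 0, ?_, S.mem_limitSet_iff.2 ⟨_, avoids_shift hω 1, hfpi⟩, hgx⟩
  exact S.cyl_wordOf_sub_dom one_pos (Set.mem_iInter.1 hfpi 1)

lemma f_mem_limitSet {x : ℝ} (hx : x ∈ S.limitSet) : S.f x ∈ S.limitSet :=
  (S.limitSet_decomp hx).choose_spec.2.1

lemma iterate_mem_limitSet {x : ℝ} (hx : x ∈ S.limitSet) (k : ℕ) :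
    S.f^[k] x ∈ S.limitSet := by
  induction k with
  | zero => simpa using hx
  | succ k ih =>
    rw [Function.iterate_succ_apply']
    exact S.f_mem_limitSet ih

/-- The set of admissible words of length `n`. -/
def wordSet (n : ℕ) : Set (List (Fin p)) := {l | ∃ ω, avoids S.Q ω ∧ wordOf ω n = l}

lemma wordSet_finite (n : ℕ) : (S.wordSet n).Finite := by
  refine (List.finite_length_eq (Fin p) n).subset ?_
  rintro l ⟨ω, _, rfl⟩
  simp [wordOf]

lemma limitSet_eq_iInter : S.limitSet = ⋂ n, ⋃ l ∈ S.wordSet n, S.cyl l := by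
  apply Set.Subset.antisymm
  · intro x hx
    obtain ⟨ω, hω, hpi⟩ := S.mem_limitSet_iff.1 hx
    exact Set.mem_iInter.2 fun n =>
      Set.mem_biUnion ⟨ω, hω, rfl⟩ (Set.mem_iInter.1 hpi n)
  · intro x hx
    have h : ∀ n, ∃ ω, avoids S.Q ω ∧ x ∈ S.cyl (wordOf ω n) := by
      intro n
      obtain ⟨l, ⟨ω, hω, rfl⟩, hxl⟩ := Set.mem_iUnion₂.1 (Set.mem_iInter.1 hx n)
      exact ⟨ω, hω, hxl⟩
    choose Ω hΩa hΩx using h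
    have coh : ∀ n i, i < n → Ω n i = Ω (i + 1) i := by
      intro n i hin
      have h1 : x ∈ S.cyl (wordOf (Ω n) (i + 1)) :=
        S.cyl_wordOf_mono (by omega) (hΩx n)
      have heq : wordOf (Ω n) (i + 1) = wordOf (Ω (i + 1)) (i + 1) :=
        S.cyl_eq_of_mem h1 (hΩx (i + 1)) (by rw [wordOf_length', wordOf_length'])
          (wordOf_ne_nil _ (Nat.succ_pos i))
      exact wordOf_eq_iff.1 heq i (Nat.lt_succ_self i)
    set ω : ℕ → Fin p := fun i => Ω (i + 1) i with hωdef
    have hagree : ∀ n i, i < n → ω i = Ω n i := fun n i h => (coh n i h).symm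
    refine S.mem_limitSet_iff.2 ⟨ω, ?_, Set.mem_iInter.2 fun n => ?_⟩
    · intro q hq j hc
      apply hΩa (j + q.length + 1) q hq j
      intro k hk
      rw [← hagree (j + q.length + 1) (j + k) (by omega)]
      exact hc k hk
    · rw [wordOf_eq_iff.2 (fun i h => hagree n i h)]
      exact hΩx n

lemma limitSet_closed : IsClosed S.limitSet := by
  rw [S.limitSet_eq_iInter]
  exact isClosed_iInter fun n =>
    (S.wordSet_finite n).isClosed_biUnion fun l _ => S.cyl_closed l

lemma exists_gder_lb : ∃ c : ℝ, 0 < c ∧ ∀ i, ∀ x ∈ S.dom, c ≤ |S.gder i x| := by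
  have hne : Nonempty (Fin p) := ⟨⟨0, S.hp⟩⟩
  have hdomne : S.dom.Nonempty := (S.Isub_nonempty ⟨0, S.hp⟩).mono (S.Isub_sub_dom _)
  have key : ∀ i : Fin p, ∃ c : ℝ, 0 < c ∧ ∀ x ∈ S.dom, c ≤ |S.gder i x| := by
    intro i
    obtain ⟨x₀, hx₀, hmin⟩ := S.dom_compact.exists_isMinOn hdomne (S.hgder_cont i).abs
    exact ⟨|S.gder i x₀|, abs_pos.2 (S.hgder_ne i x₀ hx₀), fun x hx => hmin hx⟩
  choose c hc hcle using key
  refine ⟨Finset.univ.inf' Finset.univ_nonempty c, ?_, ?_⟩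
  · exact (Finset.lt_inf'_iff _).2 fun i _ => hc i
  · intro i x hx
    exact le_trans (Finset.inf'_le _ (Finset.mem_univ i)) (hcle i x hx)

end ExpansiveMarkovSystem

end Aux


section Measure

namespace ExpansiveMarkovSystem

variable {p : ℕ} (S : ExpansiveMarkovSystem p)

lemma fder_bound {c : ℝ} (hc : 0 < c) (hlb : ∀ i, ∀ x ∈ S.dom, c ≤ |S.gder i x|)
    {i : Fin p} {x : ℝ} (hx : x ∈ S.dom) : |S.fder (S.g i x)| ≤ c⁻¹ := by
  rw [S.hfder i x hx, abs_inv]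
  exact inv_anti₀ hc (hlb i x hx)

lemma one_le_measure_limitSet {t : ℝ} {ν : Measure ℝ} (hν : S.IsConformal ν t) :
    1 ≤ ν S.limitSet := by
  haveI := hν.1
  have h1 : ν Set.univ ≤ ν S.limitSetᶜ + ν S.limitSet := by
    rw [← Set.compl_union_self S.limitSet]
    exact measure_union_le _ _
  rw [measure_univ, hν.2.1, zero_add] at h1
  exact h1

lemma image_null {t : ℝ} (ht : 0 ≤ t) {ν : Measure ℝ} (hν : S.IsConformal ν t)
    {c : ℝ} (hc : 0 < c) (hlb : ∀ i, ∀ x ∈ S.dom, c ≤ |S.gder i x|)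
    {B : Set ℝ} (hB : MeasurableSet B) (hBΛ : B ⊆ S.limitSet) (h0 : ν B = 0) :
    ν (S.f '' B) = 0 := by
  have hcover : B ⊆ ⋃ i, B ∩ S.g i '' S.dom := by
    intro x hx
    obtain ⟨i, hfd, _, hgd⟩ := S.limitSet_decomp (hBΛ hx)
    exact Set.mem_iUnion.2 ⟨i, hx, S.f x, hfd, hgd.symm⟩
  have himg : S.f '' B ⊆ ⋃ i, S.f '' (B ∩ S.g i '' S.dom) := by
    rw [← Set.image_iUnion]
    exact Set.image_mono hcover
  have hterm : ∀ i : Fin p, ν (S.f '' (B ∩ S.g i '' S.dom)) = 0 := by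
    intro i
    set A := B ∩ S.g i '' S.dom with hA
    have hgi : IsCompact (S.g i '' S.dom) :=
      S.dom_compact.image_of_continuousOn (S.g_contOn i)
    have hAm : MeasurableSet A := hB.inter hgi.isClosed.measurableSet
    have hAΛ : A ⊆ S.limitSet := Set.inter_subset_left.trans hBΛ
    have hInj : Set.InjOn S.f A := by
      rintro x₁ ⟨_, y₁, hy₁, rfl⟩ x₂ ⟨_, y₂, hy₂, rfl⟩ hfe
      rw [S.hf i y₁ hy₁, S.hf i y₂ hy₂] at hfe
      rw [hfe]
    have hconf := hν.2.2 A hAm hAΛ hInj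
    have hbd : ∀ x ∈ A, ENNReal.ofReal (|S.fder x| ^ t) ≤ ENNReal.ofReal (c⁻¹ ^ t) := by
      rintro x ⟨_, y, hy, rfl⟩
      exact ENNReal.ofReal_le_ofReal
        (Real.rpow_le_rpow (abs_nonneg _) (S.fder_bound hc hlb hy) ht)
    have hAz : ν A = 0 :=
      le_antisymm (h0 ▸ measure_mono Set.inter_subset_left) (zero_le)
    refine le_antisymm ?_ (zero_le)
    calc ν (S.f '' A) = ∫⁻ x in A, ENNReal.ofReal (|S.fder x| ^ t) ∂ν := hconf
      _ ≤ ∫⁻ _ in A, ENNReal.ofReal (c⁻¹ ^ t) ∂ν := setLIntegral_mono' hAm hbd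
      _ = ENNReal.ofReal (c⁻¹ ^ t) * ν A := setLIntegral_const _ _
      _ = 0 := by rw [hAz, mul_zero]
      _ ≤ 0 := le_refl _
  refine le_antisymm ?_ (zero_le)
  refine (measure_mono himg).trans ((measure_iUnion_le _).trans ?_)
  simp [hterm]

lemma image_f_eq {C : Set ℝ} (hCΛ : C ⊆ S.limitSet) :
    S.f '' C = ⋃ i, S.dom ∩ S.g i ⁻¹' C := by
  ext y
  constructor
  · rintro ⟨x, hx, rfl⟩
    obtain ⟨i, hfd, _, hgd⟩ := S.limitSet_decomp (hCΛ hx)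
    exact Set.mem_iUnion.2 ⟨i, hfd, by rw [Set.mem_preimage, ← hgd]; exact hx⟩
  · intro hy
    obtain ⟨i, hyd, hgy⟩ := Set.mem_iUnion.1 hy
    exact ⟨S.g i y, hgy, S.hf i y hyd⟩

lemma iterate_image_null {t : ℝ} (ht : 0 ≤ t) {ν : Measure ℝ} (hν : S.IsConformal ν t)
    {c : ℝ} (hc : 0 < c) (hlb : ∀ i, ∀ x ∈ S.dom, c ≤ |S.gder i x|)
    {B : Set ℝ} (hBc : IsCompact B) (hBΛ : B ⊆ S.limitSet) (h0 : ν B = 0) (k : ℕ) :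
    ν (S.f^[k] '' B) = 0 := by
  suffices h : ∀ k : ℕ, IsCompact (S.f^[k] '' B) ∧ S.f^[k] '' B ⊆ S.limitSet ∧
      ν (S.f^[k] '' B) = 0 from (h k).2.2
  intro k
  induction k with
  | zero => simpa using ⟨hBc, hBΛ, h0⟩
  | succ k ih =>
    obtain ⟨hCc, hCΛ, hC0⟩ := ih
    have heq : S.f^[k + 1] '' B = S.f '' (S.f^[k] '' B) := by
      rw [Function.iterate_succ', Set.image_comp]
    have hCc' : IsCompact (S.f '' (S.f^[k] '' B)) := by
      rw [S.image_f_eq hCΛ]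
      refine isCompact_iUnion fun i => ?_
      refine S.dom_compact.of_isClosed_subset ?_ Set.inter_subset_left
      exact (S.g_contOn i).preimage_isClosed_of_isClosed S.dom_compact.isClosed
        hCc.isClosed
    have hCΛ' : S.f '' (S.f^[k] '' B) ⊆ S.limitSet := by
      rintro y ⟨x, hx, rfl⟩
      exact S.f_mem_limitSet (hCΛ hx)
    have hC0' : ν (S.f '' (S.f^[k] '' B)) = 0 :=
      S.image_null ht hν hc hlb hCc.isClosed.measurableSet hCΛ hC0
    rw [heq]
    exact ⟨hCc', hCΛ', hC0'⟩

lemma exists_pos_cyl {t : ℝ} {ν : Measure ℝ} (hν : S.IsConformal ν t) (n : ℕ) :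
    ∃ l ∈ S.wordSet n, ν (S.cyl l ∩ S.limitSet) ≠ 0 := by
  by_contra h
  push_neg at h
  have hcover : S.limitSet ⊆ ⋃ l ∈ (S.wordSet_finite n).toFinset, S.cyl l ∩ S.limitSet := by
    intro x hx
    obtain ⟨ω, hω, hpi⟩ := S.mem_limitSet_iff.1 hx
    exact Set.mem_biUnion ((S.wordSet_finite n).mem_toFinset.2 ⟨ω, hω, rfl⟩)
      ⟨Set.mem_iInter.1 hpi n, hx⟩
  have h1 : ν S.limitSet ≤ ∑ l ∈ (S.wordSet_finite n).toFinset, ν (S.cyl l ∩ S.limitSet) :=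
    (measure_mono hcover).trans (measure_biUnion_finset_le _ _)
  rw [Finset.sum_eq_zero (fun l hl => h l ((S.wordSet_finite n).mem_toFinset.1 hl))] at h1
  have h2 := S.one_le_measure_limitSet hν
  have := h2.trans h1
  simp at this

/-- There is an open set cutting out exactly the trace of a given cylinder on the
limit set. -/
lemma exists_open_inter_eq {w : List (Fin p)} (hw : w ≠ []) :
    ∃ U : Set ℝ, IsOpen U ∧ U ∩ S.limitSet = S.cyl w ∩ S.limitSet := by
  set Bad : Set (List (Fin p)) := {l | l.length = w.length ∧ l ≠ w} with hBad
  have hBadfin : Bad.Finite := (List.finite_length_eq (Fin p) w.length).subset fun l hl => hl.1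
  refine ⟨(⋃ l ∈ Bad, S.cyl l)ᶜ, (hBadfin.isClosed_biUnion fun l _ => S.cyl_closed l).isOpen_compl,
    ?_⟩
  ext x
  simp only [Set.mem_inter_iff, Set.mem_compl_iff]
  constructor
  · rintro ⟨hxU, hxΛ⟩
    refine ⟨?_, hxΛ⟩
    obtain ⟨ω, hω, hpi⟩ := S.mem_limitSet_iff.1 hxΛ
    have hxc : x ∈ S.cyl (wordOf ω w.length) := Set.mem_iInter.1 hpi _
    by_cases he : wordOf ω w.length = w
    · rwa [he] at hxc
    · have hmem : wordOf ω w.length ∈ Bad := ⟨wordOf_length' ω w.length, he⟩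
      exact absurd (Set.mem_biUnion hmem hxc) hxU
  · rintro ⟨hxw, hxΛ⟩
    refine ⟨?_, hxΛ⟩
    intro hxbad
    obtain ⟨l, hl, hxl⟩ := Set.mem_iUnion₂.1 hxbad
    exact hl.2 (S.cyl_eq_of_mem hxl hxw hl.1
      (fun hnil => hw (List.eq_nil_of_length_eq_zero (by rw [← hl.1, hnil]; rfl))))

end ExpansiveMarkovSystem

end Measure

/-- A `t`-conformal measure is strictly positive on every cylinder with
nonempty intersection with `Λ_Q`. -/
theorem conformal_pos_on_cylinders {p : ℕ} (S : ExpansiveMarkovSystem p)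
    (t : ℝ) (ht : 0 ≤ t) (ν : Measure ℝ) (hν : S.IsConformal ν t)
    (w : List (Fin p)) (hw : (S.cyl w ∩ S.limitSet).Nonempty) :
    0 < ν (S.cyl w ∩ S.limitSet) := by
  classical
  by_cases hw0 : w = []
  · subst hw0
    have hΛI : S.limitSet ⊆ S.cyl [] := S.limitSet_sub_dom.trans S.dom_sub_I
    have heq : S.cyl [] ∩ S.limitSet = S.limitSet :=
      Set.inter_eq_self_of_subset_right hΛI
    rw [heq]
    exact lt_of_lt_of_le zero_lt_one (S.one_le_measure_limitSet hν)
  · have hwlen : 0 < w.length := List.length_pos_iff.2 hw0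
    rw [pos_iff_ne_zero]
    intro h0
    obtain ⟨c, hc, hlb⟩ := S.exists_gder_lb
    set n : ℕ := max (max (S.Q.sup List.length) w.length) 1 with hndef
    have hn1 : 0 < n := lt_of_lt_of_le one_pos (le_max_right _ _)
    have hnw : w.length ≤ n := le_trans (le_max_right _ _) (le_max_left _ _)
    have hnQ : ∀ q ∈ S.Q, q.length ≤ n := fun q hq =>
      le_trans (Finset.le_sup hq) (le_trans (le_max_left _ _) (le_max_left _ _))
    obtain ⟨u, huW, hupos⟩ := S.exists_pos_cyl hν n
    obtain ⟨ωu, hωu, huword⟩ := huW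
    have hulen : u.length = n := by rw [← huword, wordOf_length']
    have hune : u ≠ [] := fun h => by rw [h] at hulen; simp at hulen; omega
    obtain ⟨U, hUopen, hUeq⟩ := S.exists_open_inter_eq hw0
    obtain ⟨V, hVopen, hVeq⟩ := S.exists_open_inter_eq hune
    have hUne : (U ∩ S.limitSet).Nonempty := by rw [hUeq]; exact hw
    have hVne : (V ∩ S.limitSet).Nonempty := by
      rw [hVeq]; exact MeasureTheory.nonempty_of_measure_ne_zero hupos
    obtain ⟨k, x, hxUΛ, hfk⟩ := S.htrans U V hUopen hVopen hUne hVne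
    have hxw : x ∈ S.cyl w ∩ S.limitSet := hUeq ▸ hxUΛ
    obtain ⟨ω, hω, hpi⟩ := S.mem_limitSet_iff.1 hxw.2
    have hword_w : wordOf ω w.length = w :=
      S.cyl_eq_of_mem (Set.mem_iInter.1 hpi _) hxw.1 (wordOf_length' _ _)
        (wordOf_ne_nil _ hwlen)
    have hfkΛ : S.f^[k] x ∈ S.limitSet := S.iterate_mem_limitSet hxw.2 k
    have hfkpi : S.f^[k] x ∈ S.piSet (fun i => ω (i + k)) := S.piSet_iterate hpi k
    have hfkuv : S.f^[k] x ∈ S.cyl u ∩ S.limitSet := hVeq ▸ ⟨hfk, hfkΛ⟩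
    have hword_u : wordOf (fun i => ω (i + k)) n = u :=
      S.cyl_eq_of_mem (Set.mem_iInter.1 hfkpi n) hfkuv.1
        (by rw [wordOf_length', hulen]) (wordOf_ne_nil _ hn1)
    have hkey : ∀ i < n, ω (i + k) = ωu i :=
      wordOf_eq_iff.1 (hword_u.trans huword.symm)
    set B : Set ℝ := S.cyl (wordOf ω (k + n)) ∩ S.limitSet with hBdef
    have hcylsub : S.cyl (wordOf ω (k + n)) ⊆ S.cyl w := by
      rw [← hword_w]
      exact S.cyl_wordOf_mono (by omega)
    have hB0 : ν B = 0 := by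
      refine le_antisymm ?_ (zero_le)
      rw [← h0]
      exact measure_mono (Set.inter_subset_inter_left _ hcylsub)
    have hBc : IsCompact B := (S.cyl_compact _).inter_right S.limitSet_closed
    have hBΛ : B ⊆ S.limitSet := Set.inter_subset_right
    have hnull : ν (S.f^[k] '' B) = 0 := S.iterate_image_null ht hν hc hlb hBc hBΛ hB0 k
    have hcov : S.cyl u ∩ S.limitSet ⊆ S.f^[k] '' B := by
      rintro z ⟨hzu, hzΛ⟩
      obtain ⟨ζ, hζ, hzpi⟩ := S.mem_limitSet_iff.1 hzΛ
      have hword_z : wordOf ζ n = u :=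
        S.cyl_eq_of_mem (Set.mem_iInter.1 hzpi n) hzu (by rw [wordOf_length', hulen])
          (wordOf_ne_nil _ hn1)
      set η : ℕ → Fin p := fun i => if i < k then ω i else ζ (i - k) with hηdef
      have hζωu : ∀ j < n, ζ j = ωu j := wordOf_eq_iff.1 (hword_z.trans huword.symm)
      have hηω : ∀ i < k + n, η i = ω i := by
        intro i hi
        by_cases hik : i < k
        · simp [hηdef, hik]
        · have h1 : i - k < n := by omega
          have h2 : η i = ζ (i - k) := by simp [hηdef, hik]
          rw [h2, hζωu _ h1, ← hkey _ h1]
          congr 1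
          omega
      have hηζ : ∀ i, η (i + k) = ζ i := by
        intro i
        have h1 : ¬ (i + k < k) := by omega
        simp only [hηdef, h1, if_false]
        congr 1
        omega
      have hηa : avoids S.Q η := by
        intro q hq j hcq
        by_cases hcase : j + q.length ≤ k + n
        · apply hω q hq j
          intro m hm
          rw [← hηω (j + m) (by omega)]
          exact hcq m hm
        · have hjk : k ≤ j := by have := hnQ q hq; omega
          apply hζ q hq (j - k)
          intro m hm
          calc ζ (j - k + m) = η ((j - k + m) + k) := (hηζ _).symm
            _ = η (j + m) := by congr 1; omega
            _ = _ := hcq m hm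
      obtain ⟨x', hx'⟩ := S.piSet_nonempty η
      have hx'B : x' ∈ B := by
        constructor
        · have h1 : x' ∈ S.cyl (wordOf η (k + n)) := Set.mem_iInter.1 hx' _
          rwa [wordOf_eq_iff.2 (fun i hi => hηω i hi)] at h1
        · exact S.mem_limitSet_iff.2 ⟨η, hηa, hx'⟩
      refine ⟨x', hx'B, ?_⟩
      have h1 : S.f^[k] x' ∈ S.piSet (fun i => η (i + k)) := S.piSet_iterate hx' k
      have h2 : (fun i => η (i + k)) = ζ := funext hηζ
      rw [h2] at h1
      exact S.piSet_subsingleton h1 hzpi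
    exact hupos (le_antisymm (hnull ▸ measure_mono hcov) (zero_le))
end
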